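/- Let G be a bipartite graph with two vertices x, y in the same partite set satisfying N(x) ⊊ N(y). Then for n > 1, χ_ld(G[\overline{K_n}]) ≥ 3, provided G[\overline{K_n}] admits a local distance antimagic labeling. -/

import Mathlib

open Finset

open Classical in
/-- The weight of a vertex: sum of labels of its neighbors. -/
noncomputable def ldWeight {V : Type*} (G : SimpleGraph V) [Fintype V] (f : V → ℕ) (v : V) : ℕ :=
  ∑ x ∈ Finset.univ, if G.Adj v x then f x else 0

/-- `f` is a local distance antimagic labeling of `G`: a bijection onto `{1,…,|V|}`
with adjacent vertices getting distinct weights. -/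
def IsLDAL {V : Type*} (G : SimpleGraph V) [Fintype V] (f : V → ℕ) : Prop :=
  Set.BijOn f Set.univ (Set.Icc 1 (Fintype.card V)) ∧
    ∀ ⦃u v : V⦄, G.Adj u v → ldWeight G f u ≠ ldWeight G f v

/-- The local distance antimagic chromatic number: minimum number of distinct weights. -/
noncomputable def chiLD {V : Type*} (G : SimpleGraph V) [Fintype V] : ℕ :=
  sInf {k | ∃ f : V → ℕ, IsLDAL G f ∧ (Finset.univ.image (ldWeight G f)).card = k}

/-- The join `G + H` of two graphs. -/
def graphJoin {α β : Type*} (G : SimpleGraph α) (H : SimpleGraph β) :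
    SimpleGraph (α ⊕ β) where
  Adj x y :=
    match x, y with
    | Sum.inl a, Sum.inl b => G.Adj a b
    | Sum.inr a, Sum.inr b => H.Adj a b
    | Sum.inl _, Sum.inr _ => True
    | Sum.inr _, Sum.inl _ => True
  symm := by
    refine ⟨?_⟩
    rintro (a | a) (b | b) h
    exacts [h.symm, trivial, trivial, h.symm]
  loopless := by
    refine ⟨?_⟩
    rintro (a | a) h
    exacts [G.irrefl h, H.irrefl h]

/-- The lexicographic product `G[H]`. -/
def lexProd {α β : Type*} (G : SimpleGraph α) (H : SimpleGraph β) :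
    SimpleGraph (α × β) where
  Adj x y := G.Adj x.1 y.1 ∨ (x.1 = y.1 ∧ H.Adj x.2 y.2)
  symm := by
    refine ⟨?_⟩
    rintro x y (h | ⟨e, h⟩)
    exacts [Or.inl h.symm, Or.inr ⟨e.symm, h.symm⟩]
  loopless := by
    refine ⟨?_⟩
    rintro x (h | ⟨e, h⟩)
    exacts [G.irrefl h, H.irrefl h]

/-- The friendship graph `F_n`: `n` triangles sharing the central vertex `none`. -/
def friendship (n : ℕ) : SimpleGraph (Option (Fin n × Fin 2)) where
  Adj x y := x ≠ y ∧ (x = none ∨ y = none ∨ ∃ i a b, x = some (i, a) ∧ y = some (i, b))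
  symm := by
    refine ⟨?_⟩
    rintro x y ⟨hne, h⟩
    refine ⟨hne.symm, ?_⟩
    rcases h with h | h | ⟨i, a, b, hx, hy⟩
    · exact Or.inr (Or.inl h)
    · exact Or.inl h
    · exact Or.inr (Or.inr ⟨i, b, a, hy, hx⟩)
  loopless := ⟨fun x h => h.1 rfl⟩

/-- The bistar `B_{n,n}`: two adjacent centers, each with `n` leaves. -/
def bistar (n : ℕ) : SimpleGraph (Bool ⊕ Bool × Fin n) where
  Adj x y :=
    match x, y with
    | Sum.inl a, Sum.inl b => a ≠ b
    | Sum.inl a, Sum.inr (c, _) => a = c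
    | Sum.inr (c, _), Sum.inl a => a = c
    | Sum.inr _, Sum.inr _ => False
  symm := by
    refine ⟨?_⟩
    rintro (a | ⟨c, i⟩) (b | ⟨d, j⟩) h
    exacts [h.symm, h, h, h.elim]
  loopless := by
    refine ⟨?_⟩
    rintro (a | ⟨c, i⟩) h
    exacts [h rfl, h]

theorem stmt_16 {V : Type*} [Fintype V] (G : SimpleGraph V) (n : ℕ) (hn : 1 < n)
    (s : Set V) (hbip : ∀ ⦃u v⦄, G.Adj u v → (u ∈ s ↔ v ∉ s))
    (x y : V) (hxy : x ∈ s ↔ y ∈ s)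
    (hsub : G.neighborSet x ⊂ G.neighborSet y)
    (hex : ∃ f, IsLDAL (lexProd G (⊥ : SimpleGraph (Fin n))) f) :
    3 ≤ chiLD (lexProd G (⊥ : SimpleGraph (Fin n))) := by
  classical
  apply le_csInf
  · obtain ⟨f, hf⟩ := hex
    exact ⟨_, f, hf, rfl⟩
  rintro k ⟨f, ⟨hbij, hadj⟩, rfl⟩
  have hf1 : ∀ v : V × Fin n, 1 ≤ f v := fun v => (hbij.mapsTo (Set.mem_univ v)).1
  set H := lexProd G (⊥ : SimpleGraph (Fin n)) with hH
  have i0 : Fin n := ⟨0, by omega⟩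
  -- weight formula
  have hw : ∀ (v : V) (i : Fin n),
      ldWeight H f (v, i) = ∑ p : V × Fin n, if G.Adj v p.1 then f p else 0 := by
    intro v i
    unfold ldWeight
    apply Finset.sum_congr rfl
    intro p _
    congr 1
    simp [hH, lexProd]
  -- adjacency in H from adjacency in G
  have hadjH : ∀ {u v : V} (i j : Fin n), G.Adj u v → H.Adj (u, i) (v, j) := by
    intro u v i j h
    exact Or.inl h
  obtain ⟨z, hzy, hzx⟩ := Set.exists_of_ssubset hsub
  have hzy' : G.Adj y z := hzy
  have hzx' : ¬ G.Adj x z := hzx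
  have hxlty : ldWeight H f (x, i0) < ldWeight H f (y, i0) := by
    rw [hw, hw]
    apply Finset.sum_lt_sum
    · intro p _
      by_cases h : G.Adj x p.1
      · have h2 : G.Adj y p.1 := hsub.1 h
        simp [h, h2]
      · simp [h]
    · refine ⟨(z, i0), Finset.mem_univ _, ?_⟩
      simp only [hzx', if_false, hzy', if_true]
      exact hf1 (z, i0)
  -- find three pairwise distinct weights
  have key : ∃ a b c : V × Fin n, ldWeight H f a ≠ ldWeight H f b ∧
      ldWeight H f a ≠ ldWeight H f c ∧ ldWeight H f b ≠ ldWeight H f c := by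
    by_cases hNx : ∃ u, G.Adj x u
    · obtain ⟨u, hu⟩ := hNx
      have huy : G.Adj y u := hsub.1 hu
      refine ⟨(x, i0), (y, i0), (u, i0), hxlty.ne, ?_, ?_⟩
      · exact hadj (hadjH i0 i0 hu)
      · exact hadj (hadjH i0 i0 huy)
    · push_neg at hNx
      have hx0 : ldWeight H f (x, i0) = 0 := by
        rw [hw]
        apply Finset.sum_eq_zero
        intro p _
        simp [hNx p.1]
      have hz0 : 0 < ldWeight H f (z, i0) := by
        rw [hw]
        refine Finset.sum_pos' (fun p _ => by positivity) ⟨(y, i0), Finset.mem_univ _, ?_⟩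
        simp only [hzy'.symm, if_true]
        exact hf1 (y, i0)
      refine ⟨(x, i0), (y, i0), (z, i0), hxlty.ne, ?_, ?_⟩
      · rw [hx0]; exact (hz0.ne)
      · exact hadj (hadjH i0 i0 hzy')
  obtain ⟨a, b, c, hab, hac, hbc⟩ := key
  have hsubset : ({ldWeight H f a, ldWeight H f b, ldWeight H f c} : Finset ℕ) ⊆
      Finset.univ.image (ldWeight H f) := by
    intro t ht
    simp only [Finset.mem_insert, Finset.mem_singleton] at ht
    rcases ht with rfl | rfl | rfl <;> exact Finset.mem_image_of_mem _ (Finset.mem_univ _)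
  calc 3 = ({ldWeight H f a, ldWeight H f b, ldWeight H f c} : Finset ℕ).card := by
        rw [Finset.card_insert_of_notMem (by simp [hab, hac]),
          Finset.card_insert_of_notMem (by simp [hbc]), Finset.card_singleton]
    _ ≤ _ := Finset.card_le_card hsubset
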